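/- Let n ≥ 3 and let M be an n × n Boolean matrix. Define the table T on {0, 1, …, n−1} by: T(i, n−1−i) = n−1 if M(i,i) = 1 and T(i, n−1−i) = 0 otherwise; and for j ≠ n−1−i, T(i, j) = (i + j) mod n if M(i, n−1−j) = 0, T(i, j) = 0 if M(i, n−1−j) = 1 and (i + j) mod n ≠ 0, and T(i, j) = 1 if M(i, n−1−j) = 1 and (i + j) mod n = 0. Then ({0,…,n−1}, T) is a loop if and only if M is the identity matrix (M(i,j) = 1 exactly when i = j). -/

import Mathlib

lemma amod {n i j : ℕ} (hi : i < n) (hj : j < n) :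
    (i + j) % n = if i + j < n then i + j else i + j - n := by
  split_ifs with h
  · exact Nat.mod_eq_of_lt h
  · rw [Nat.mod_eq_sub_mod (by omega), Nat.mod_eq_of_lt (by omega)]

lemma res_unique {n i j k : ℕ} (hi : i < n) (hj : j < n) (hk : k < n)
    (h : (i + j) % n = (i + k) % n) : j = k := by
  rw [amod hi hj, amod hi hk] at h
  split_ifs at h <;> omega

lemma rowfacts (n i : ℕ) (hn : 3 ≤ n) (hi : i < n) :
    (n - i) % n < n ∧ (n + 1 - i) % n < n ∧ (i + (n - i) % n) % n = 0 ∧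
      (i + (n + 1 - i) % n) % n = 1 ∧ (n - i) % n ≠ n - 1 - i ∧
      (n + 1 - i) % n ≠ n - 1 - i := by
  have hn0 : 0 < n := by omega
  have hd : i + (n - 1 - i) = n - 1 := by omega
  have ha : (i + (n - i) % n) % n = 0 := by
    rcases Nat.eq_zero_or_pos i with h0 | h0
    · subst h0; simp [Nat.mod_self]
    · rw [Nat.mod_eq_of_lt (show n - i < n by omega)]
      have h : i + (n - i) = n := by omega
      rw [h, Nat.mod_self]
  have hb : (i + (n + 1 - i) % n) % n = 1 := by
    rcases Nat.lt_or_ge i 2 with h2 | h2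
    · interval_cases i
      · simp only [Nat.sub_zero, Nat.zero_add]
        rw [Nat.add_mod_left, Nat.mod_eq_of_lt (show (1:ℕ) < n by omega),
          Nat.mod_eq_of_lt (show (1:ℕ) < n by omega)]
      · have h : n + 1 - 1 = n := by omega
        rw [h, Nat.mod_self, Nat.mod_eq_of_lt (show 1 + 0 < n by omega)]
    · rw [Nat.mod_eq_of_lt (show n + 1 - i < n by omega)]
      have h : i + (n + 1 - i) = n + 1 := by omega
      rw [h, Nat.add_mod_left, Nat.mod_eq_of_lt (show (1:ℕ) < n by omega)]
  refine ⟨Nat.mod_lt _ hn0, Nat.mod_lt _ hn0, ha, hb, ?_, ?_⟩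
  · intro h
    rw [h, hd, Nat.mod_eq_of_lt (by omega)] at ha; omega
  · intro h
    rw [h, hd, Nat.mod_eq_of_lt (by omega)] at hb; omega

lemma row_master (n : ℕ) (hn : 3 ≤ n) (M : ℕ → ℕ → Bool) (T : ℕ → ℕ → ℕ)
    (hoff : ∀ i < n, ∀ j < n, j ≠ n - 1 - i →
      T i j = if M i (n - 1 - j) = true
        then (if (i + j) % n ≠ 0 then 0 else 1)
        else (i + j) % n)
    (hrowinj : ∀ i < n, ∀ j < n, ∀ k < n, T i j = T i k → j = k)
    (i : ℕ) (hi : i < n) (j : ℕ) (hj : j < n) (hjne : j ≠ n - 1 - i)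
    (hMj : M i (n - 1 - j) = true) :
    M i (n - 1 - (n - i) % n) = true ∧ M i (n - 1 - (n + 1 - i) % n) = true ∧
      (j = (n - i) % n ∨ j = (n + 1 - i) % n) ∧
      T i ((n - i) % n) = 1 ∧ T i ((n + 1 - i) % n) = 0 := by
  obtain ⟨han, hbn, ha0, hb1, hane, hbne⟩ := rowfacts n i hn hi
  set a := (n - i) % n with hadef
  set b := (n + 1 - i) % n with hbdef
  have hab : a ≠ b := by intro h; rw [h, hb1] at ha0; omega
  have hTa : T i a = if M i (n - 1 - a) = true then 1 else 0 := by
    rw [hoff i hi a han hane, ha0]; simp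
  have hTb : T i b = if M i (n - 1 - b) = true then 0 else 1 := by
    rw [hoff i hi b hbn hbne, hb1]; simp
  have hMa : M i (n - 1 - a) = true := by
    cases hMa : M i (n - 1 - a) with
    | true => rfl
    | false =>
      exfalso
      have hMb : M i (n - 1 - b) = false := by
        cases hMb : M i (n - 1 - b) with
        | false => rfl
        | true =>
          exfalso; apply hab
          apply hrowinj i hi a han b hbn
          rw [hTa, hTb, hMa, hMb]; simp
      have hja : j ≠ a := by
        intro h; rw [h, hMa] at hMj; simp at hMj
      have hjz : (i + j) % n ≠ 0 := fun h => hja (res_unique hi hj han (by rw [h, ha0]))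
      have hTj : T i j = 0 := by rw [hoff i hi j hj hjne, hMj]; simp [hjz]
      have hTa0 : T i a = 0 := by rw [hTa, hMa]; simp
      exact hja (hrowinj i hi j hj a han (hTj.trans hTa0.symm))
  have hMb : M i (n - 1 - b) = true := by
    cases hMb : M i (n - 1 - b) with
    | true => rfl
    | false =>
      exfalso; apply hab
      apply hrowinj i hi a han b hbn
      rw [hTa, hTb, hMa, hMb]; simp
  have hTa1 : T i a = 1 := by rw [hTa, hMa]; simp
  have hTb0 : T i b = 0 := by rw [hTb, hMb]; simp
  refine ⟨hMa, hMb, ?_, hTa1, hTb0⟩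
  by_cases hz : (i + j) % n = 0
  · left; exact res_unique hi hj han (by rw [hz, ha0])
  · right
    have hTj : T i j = 0 := by rw [hoff i hi j hj hjne, hMj]; simp [hz]
    exact hrowinj i hi j hj b hbn (hTj.trans hTb0.symm)


/-- `T` is a loop on `{0, …, n-1}`: for every `i < n`, the maps `j ↦ T i j` and
`j ↦ T j i` are bijections of `{0, …, n-1}`, and there is an identity element. -/
def IsLoopOn (n : ℕ) (T : ℕ → ℕ → ℕ) : Prop :=
  (∀ i < n, Set.BijOn (fun j => T i j) (Set.Iio n) (Set.Iio n) ∧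
      Set.BijOn (fun j => T j i) (Set.Iio n) (Set.Iio n)) ∧
  ∃ e < n, ∀ i < n, T i e = i ∧ T e i = i

/-- Let `n ≥ 3`, let `M` be an `n × n` Boolean matrix (`true` meaning `1`), and
let `T` be the table on `{0, …, n-1}` defined by: `T i (n-1-i) = n-1` if
`M i i = 1` and `0` otherwise; for `j ≠ n-1-i`, `T i j = (i+j) % n` if
`M i (n-1-j) = 0`, `T i j = 0` if `M i (n-1-j) = 1` and `(i+j) % n ≠ 0`, and
`T i j = 1` otherwise.  Then `T` is a loop on `{0, …, n-1}` iff `M` is the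
identity matrix. -/
theorem loop_iff_identity_matrix (n : ℕ) (hn : 3 ≤ n)
    (M : ℕ → ℕ → Bool) (T : ℕ → ℕ → ℕ)
    (hdiag : ∀ i < n, T i (n - 1 - i) = if M i i = true then n - 1 else 0)
    (hoff : ∀ i < n, ∀ j < n, j ≠ n - 1 - i →
      T i j = if M i (n - 1 - j) = true
        then (if (i + j) % n ≠ 0 then 0 else 1)
        else (i + j) % n) :
    IsLoopOn n T ↔ (∀ i < n, ∀ j < n, (M i j = true ↔ i = j)) := by
  unfold IsLoopOn
  have hn0 : 0 < n := by omega
  constructor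
  · rintro ⟨hbij, e, he, heid⟩
    have hrowinj : ∀ i < n, ∀ j < n, ∀ k < n, T i j = T i k → j = k := fun i hi j hj k hk h =>
      (hbij i hi).1.2.1 (Set.mem_Iio.mpr hj) (Set.mem_Iio.mpr hk) h
    have hcolsurj : ∀ c < n, ∀ v < n, ∃ j < n, T j c = v := by
      intro c hc v hv
      obtain ⟨j, hj, hjv⟩ := (hbij c hc).2.2.2 (Set.mem_Iio.mpr hv)
      exact ⟨j, Set.mem_Iio.mp hj, hjv⟩
    -- Step A: diagonal of M is all true
    have hMdiag : ∀ i < n, M i i = true := by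
      intro i hi
      cases hMii : M i i with
      | true => rfl
      | false =>
        exfalso
        obtain ⟨han, hbn, ha0, hb1, hane, hbne⟩ := rowfacts n i hn hi
        set a := (n - i) % n
        set b := (n + 1 - i) % n
        have hab : a ≠ b := by intro h; rw [h, hb1] at ha0; omega
        have hdn : n - 1 - i < n := by omega
        have hTd : T i (n - 1 - i) = 0 := by rw [hdiag i hi, hMii]; simp
        have hTa : T i a = if M i (n - 1 - a) = true then 1 else 0 := by
          rw [hoff i hi a han hane, ha0]; simp
        have hTb : T i b = if M i (n - 1 - b) = true then 0 else 1 := by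
          rw [hoff i hi b hbn hbne, hb1]; simp
        cases hMa : M i (n - 1 - a) with
        | false =>
          rw [hMa] at hTa; simp at hTa
          exact hane (hrowinj i hi a han (n - 1 - i) hdn (hTa.trans hTd.symm))
        | true =>
          rw [hMa] at hTa; simp at hTa
          cases hMb : M i (n - 1 - b) with
          | false =>
            rw [hMb] at hTb; simp at hTb
            exact hab (hrowinj i hi a han b hbn (hTa.trans hTb.symm))
          | true =>
            rw [hMb] at hTb; simp at hTb
            exact hbne (hrowinj i hi b hbn (n - 1 - i) hdn (hTb.trans hTd.symm))
    -- Step B: e = 0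
    have he0 : e = 0 := by
      have h1 := (heid (n - 1 - e) (by omega)).2
      rw [hdiag e he, hMdiag e he] at h1
      simp at h1; omega
    subst he0
    have hT0 : ∀ i < n, T i 0 = i := fun i hi => (heid i hi).1
    -- Step D: no bad rows
    have hbad : ∀ d, ∀ i, i < n → n - i ≤ d →
        M i (n - 1 - (n - i) % n) = true → M i (n - 1 - (n + 1 - i) % n) = true → False := by
      intro d
      induction d with
      | zero => intro i hi hle _ _; omega
      | succ d ih =>
        intro i hi hle h1 h2
        -- i ≠ 0
        have hi0 : i ≠ 0 := by
          intro h; subst h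
          rw [Nat.sub_zero, Nat.mod_self, Nat.sub_zero] at h1
          have hT00 : T 0 0 = 1 := by
            rw [hoff 0 hn0 0 hn0 (by omega)]
            simp only [Nat.sub_zero]
            simp [h1]
          rw [hT0 0 hn0] at hT00; omega
        have hi1 : i ≠ 1 := by
          intro h; subst h
          have hnn : (n + 1 - 1) % n = 0 := by
            rw [show n + 1 - 1 = n by omega, Nat.mod_self]
          rw [hnn, Nat.sub_zero] at h2
          have hT10 : T 1 0 = 0 := by
            rw [hoff 1 (by omega) 0 hn0 (by omega)]
            simp only [Nat.sub_zero]
            simp [h2, Nat.mod_eq_of_lt (show 1 + 0 < n by omega)]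
          rw [hT0 1 (by omega)] at hT10; omega
        have hi2 : 2 ≤ i := by omega
        set c := (n - i) % n with hcdef
        have hcv : c = n - i := by rw [hcdef, Nat.mod_eq_of_lt (by omega)]
        have hcn : c < n := by omega
        obtain ⟨j, hjn, hj0⟩ := hcolsurj c hcn 0 (by omega)
        have hjne : j ≠ n - 1 - c := by
          intro h; subst h
          have hd2 := hdiag (n - 1 - c) (by omega)
          rw [hMdiag (n - 1 - c) (by omega)] at hd2
          rw [show n - 1 - (n - 1 - c) = c by omega] at hd2
          rw [hj0] at hd2; simp at hd2; omega
        have hcne : c ≠ n - 1 - j := by intro h; apply hjne; omega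
        have hTjc := hoff j hjn c hcn hcne
        rw [hj0] at hTjc
        cases hMjc : M j (n - 1 - c) with
        | false =>
          rw [hMjc] at hTjc; simp at hTjc
          -- (j + c) % n = 0, so j = i
          have hji : j = i := by
            rw [amod hjn hcn] at hTjc
            split_ifs at hTjc <;> omega
          subst hji
          rw [hcdef] at hMjc
          rw [hMjc] at h1; simp at h1
        | true =>
          rw [hMjc] at hTjc; simp at hTjc
          have hz : (j + c) % n ≠ 0 := by
            intro h; exact hTjc h
          obtain ⟨hMja', hMjb', hcab, hTja1, hTjb0⟩ :=
            row_master n hn M T hoff hrowinj j hjn c hcn hcne hMjc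
          rcases hcab with h | h
          · rw [← h, hj0] at hTja1; omega
          · -- c = (n+1-j) % n
            have hj01 : j ≠ 0 ∧ j ≠ 1 := by
              constructor
              · intro hj'; subst hj'
                rw [Nat.sub_zero, Nat.mod_self] at hTja1
                rw [hT0 0 hn0] at hTja1; omega
              · intro hj'; subst hj'
                rw [show n + 1 - 1 = n by omega, Nat.mod_self] at hTjb0
                rw [hT0 1 (by omega)] at hTjb0; omega
            have hjv : j = i + 1 := by
              rw [Nat.mod_eq_of_lt (by omega)] at h
              omega
            exact ih j hjn (by omega) hMja' hMjb'
    -- conclusion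
    intro i hi k hk
    constructor
    · intro hMik
      by_contra hne
      have hjn : n - 1 - k < n := by omega
      have hjne : n - 1 - k ≠ n - 1 - i := by omega
      have hMk : M i (n - 1 - (n - 1 - k)) = true := by
        rw [show n - 1 - (n - 1 - k) = k by omega]; exact hMik
      obtain ⟨hMa, hMb, _, _, _⟩ :=
        row_master n hn M T hoff hrowinj i hi (n - 1 - k) hjn hjne hMk
      exact hbad n i hi (by omega) hMa hMb
    · intro h; subst h; exact hMdiag i hi
  · -- easy direction
    intro hM
    have hTval : ∀ i < n, ∀ j < n, T i j = (i + j) % n := by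
      intro i hi j hj
      by_cases hji : j = n - 1 - i
      · subst hji
        rw [hdiag i hi, (hM i hi i hi).mpr rfl]
        simp
        rw [show i + (n - 1 - i) = n - 1 by omega, Nat.mod_eq_of_lt (by omega)]
      · rw [hoff i hi j hj hji]
        have hne : M i (n - 1 - j) = false := by
          cases hMc : M i (n - 1 - j) with
          | false => rfl
          | true =>
            exfalso
            have := (hM i hi (n - 1 - j) (by omega)).mp hMc
            omega
        rw [hne]; simp
    have key : ∀ i < n, Set.BijOn (fun j => (i + j) % n) (Set.Iio n) (Set.Iio n) := by
      intro i hi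
      refine ⟨fun j hj => Set.mem_Iio.mpr (Nat.mod_lt _ hn0), ?_, ?_⟩
      · intro j hj k hk h
        simp only at h
        rw [amod hi (Set.mem_Iio.mp hj), amod hi (Set.mem_Iio.mp hk)] at h
        have hj' := Set.mem_Iio.mp hj
        have hk' := Set.mem_Iio.mp hk
        split_ifs at h <;> omega
      · intro y hy
        have hy' := Set.mem_Iio.mp hy
        rcases le_or_gt i y with hiy | hiy
        · refine ⟨y - i, Set.mem_Iio.mpr (by omega), ?_⟩
          simp only
          rw [show i + (y - i) = y by omega, Nat.mod_eq_of_lt hy']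
        · refine ⟨n + y - i, Set.mem_Iio.mpr (by omega), ?_⟩
          simp only
          rw [show i + (n + y - i) = n + y by omega, Nat.add_mod_left,
            Nat.mod_eq_of_lt hy']
    refine ⟨fun i hi => ⟨?_, ?_⟩, 0, hn0, fun i hi => ⟨?_, ?_⟩⟩
    · exact (key i hi).congr fun j hj => (hTval i hi j (Set.mem_Iio.mp hj)).symm
    · exact (key i hi).congr fun j hj => by
        show (i + j) % n = T j i
        rw [hTval j (Set.mem_Iio.mp hj) i hi, Nat.add_comm]
    · rw [hTval i hi 0 hn0, Nat.add_zero, Nat.mod_eq_of_lt hi]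
    · rw [hTval 0 hn0 i hi, Nat.zero_add, Nat.mod_eq_of_lt hi]
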